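/- Let A, B ∈ ℝ^{n×n} be symmetric matrices and C = A + B. Let (α_i), (β_i), (γ_i) be the eigenvalues of A, B, C respectively, each arranged in non-increasing order. Then for every subset I ⊆ {1,…,n} of cardinality r, ∑_{i∈I} γ_i ≤ ∑_{i∈I} α_i + ∑_{i=1}^r β_i. -/

import Mathlib

open Finset

open scoped RealInnerProductSpace

namespace WielandtAux

variable {n : ℕ}

/-- Eigen-equation for `toEuclideanLin`. -/
lemma toEuclideanLin_eigen {X : Matrix (Fin n) (Fin n) ℝ} (hX : X.IsHermitian) (j : Fin n) :
    Matrix.toEuclideanLin X (hX.eigenvectorBasis j) =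
      hX.eigenvalues j • hX.eigenvectorBasis j := by
  have h := hX.mulVec_eigenvectorBasis j
  apply (WithLp.equiv 2 (Fin n → ℝ)).injective
  simpa [Matrix.toEuclideanLin_apply] using h

lemma inner_toEuclideanLin_eq {X : Matrix (Fin n) (Fin n) ℝ} (hX : X.IsHermitian)
    (w : EuclideanSpace ℝ (Fin n)) :
    ⟪w, Matrix.toEuclideanLin X w⟫ =
      ∑ i, hX.eigenvalues i * ⟪hX.eigenvectorBasis i, w⟫ ^ 2 := by
  have hsym : (Matrix.toEuclideanLin X).IsSymmetric :=
    Matrix.isHermitian_iff_isSymmetric.1 hX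
  rw [← OrthonormalBasis.sum_inner_mul_inner hX.eigenvectorBasis w
    (Matrix.toEuclideanLin X w)]
  refine Finset.sum_congr rfl fun i _ => ?_
  rw [← hsym (hX.eigenvectorBasis i) w, toEuclideanLin_eigen hX i, real_inner_smul_left,
    real_inner_comm w]
  ring

lemma inner_self_eq_sum (b : OrthonormalBasis (Fin n) ℝ (EuclideanSpace ℝ (Fin n)))
    (w : EuclideanSpace ℝ (Fin n)) : ⟪w, w⟫ = ∑ i, ⟪b i, w⟫ ^ 2 := by
  rw [← OrthonormalBasis.sum_inner_mul_inner b w w]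
  refine Finset.sum_congr rfl fun i _ => ?_
  rw [real_inner_comm w]
  ring

lemma inner_eq_zero_of_span {b : OrthonormalBasis (Fin n) ℝ (EuclideanSpace ℝ (Fin n))}
    {s : Finset (Fin n)} {j : Fin n} (hj : j ∉ s) {w : EuclideanSpace ℝ (Fin n)}
    (hw : w ∈ Submodule.span ℝ (⇑b '' ↑s)) : ⟪b j, w⟫ = 0 := by
  induction hw using Submodule.span_induction with
  | mem x hx =>
    obtain ⟨k, hk, rfl⟩ := hx
    exact b.orthonormal.2 fun h : j = k => hj (h ▸ hk)
  | zero => exact inner_zero_right _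
  | add x y _ _ hx hy => rw [inner_add_right, hx, hy, add_zero]
  | smul c x _ hx => rw [real_inner_smul_right, hx, mul_zero]

lemma quad_ge {X : Matrix (Fin n) (Fin n) ℝ} (hX : X.IsHermitian) {s : Finset (Fin n)} {c : ℝ}
    (hc : ∀ j ∈ s, c ≤ hX.eigenvalues j) {w : EuclideanSpace ℝ (Fin n)}
    (hw : w ∈ Submodule.span ℝ (⇑hX.eigenvectorBasis '' ↑s)) :
    c * ⟪w, w⟫ ≤ ⟪w, Matrix.toEuclideanLin X w⟫ := by
  rw [inner_toEuclideanLin_eq hX, inner_self_eq_sum hX.eigenvectorBasis, Finset.mul_sum]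
  refine Finset.sum_le_sum fun i _ => ?_
  by_cases hi : i ∈ s
  · exact mul_le_mul_of_nonneg_right (hc i hi) (sq_nonneg _)
  · rw [inner_eq_zero_of_span hi hw]
    simp

lemma quad_le {X : Matrix (Fin n) (Fin n) ℝ} (hX : X.IsHermitian) {s : Finset (Fin n)} {c : ℝ}
    (hc : ∀ j ∈ s, hX.eigenvalues j ≤ c) {w : EuclideanSpace ℝ (Fin n)}
    (hw : w ∈ Submodule.span ℝ (⇑hX.eigenvectorBasis '' ↑s)) :
    ⟪w, Matrix.toEuclideanLin X w⟫ ≤ c * ⟪w, w⟫ := by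
  rw [inner_toEuclideanLin_eq hX, inner_self_eq_sum hX.eigenvectorBasis, Finset.mul_sum]
  refine Finset.sum_le_sum fun i _ => ?_
  by_cases hi : i ∈ s
  · exact mul_le_mul_of_nonneg_right (hc i hi) (sq_nonneg _)
  · rw [inner_eq_zero_of_span hi hw]
    simp

lemma psd_inner_nonneg {M : Matrix (Fin n) (Fin n) ℝ} (hM : M.PosSemidef)
    (w : EuclideanSpace ℝ (Fin n)) : 0 ≤ ⟪w, Matrix.toEuclideanLin M w⟫ := by
  have h := hM.dotProduct_mulVec_nonneg ((WithLp.equiv 2 (Fin n → ℝ)) w)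
  simpa [dotProduct, PiLp.inner_apply, RCLike.inner_apply, starRingEnd_apply,
    Matrix.toEuclideanLin_apply, mul_comm] using h

lemma toEuclideanLin_one :
    Matrix.toEuclideanLin (1 : Matrix (Fin n) (Fin n) ℝ) = LinearMap.id := by
  ext w
  simp [Matrix.toEuclideanLin_apply, Matrix.one_mulVec]

lemma finrank_span_image (b : OrthonormalBasis (Fin n) ℝ (EuclideanSpace ℝ (Fin n)))
    (s : Finset (Fin n)) :
    Module.finrank ℝ (Submodule.span ℝ (⇑b '' ↑s)) = s.card := by
  have li : LinearIndependent ℝ (⇑b ∘ (Subtype.val : {x // x ∈ s} → Fin n)) :=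
    (b.orthonormal.comp _ Subtype.val_injective).linearIndependent
  have hspan : Submodule.span ℝ (⇑b '' ↑s) =
      Submodule.span ℝ (Set.range (⇑b ∘ (Subtype.val : {x // x ∈ s} → Fin n))) := by
    congr 1
    ext x
    simp [Set.range_comp]
  rw [hspan, finrank_span_eq_card li, Fintype.card_coe]

/-- Generalized Weyl monotonicity: if `Y - (X + t•1)` is PSD then the sorted eigenvalues
satisfy `f i + t ≤ g i`. -/
lemma weyl {X Y : Matrix (Fin n) (Fin n) ℝ} (hX : X.IsHermitian) (hY : Y.IsHermitian)
    (t : ℝ) (hpsd : (Y - (X + t • 1)).PosSemidef)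
    {f g : Fin n → ℝ} {σ τ : Equiv.Perm (Fin n)}
    (hf : f = hX.eigenvalues ∘ σ) (hfm : Antitone f)
    (hg : g = hY.eigenvalues ∘ τ) (hgm : Antitone g) (i : Fin n) :
    f i + t ≤ g i := by
  classical
  set s₁ : Finset (Fin n) := (Finset.Iic i).image σ with hs₁
  set s₂ : Finset (Fin n) := (Finset.Ici i).image τ with hs₂
  set S := Submodule.span ℝ (⇑hX.eigenvectorBasis '' ↑s₁) with hS
  set T := Submodule.span ℝ (⇑hY.eigenvectorBasis '' ↑s₂) with hT
  have hSd : Module.finrank ℝ S = (i : ℕ) + 1 := by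
    rw [hS, finrank_span_image, hs₁, Finset.card_image_of_injective _ σ.injective, Fin.card_Iic]
  have hTd : Module.finrank ℝ T = n - (i : ℕ) := by
    rw [hT, finrank_span_image, hs₂, Finset.card_image_of_injective _ τ.injective, Fin.card_Ici]
  have hnd : ¬ Disjoint S T := by
    intro hd
    have hle := Submodule.finrank_add_finrank_le_of_disjoint hd
    rw [hSd, hTd, finrank_euclideanSpace_fin] at hle
    have := i.isLt
    omega
  have hne : S ⊓ T ≠ ⊥ := fun h => hnd (disjoint_iff.mpr h)
  obtain ⟨w, hw, hw0⟩ := Submodule.exists_mem_ne_zero_of_ne_bot hne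
  obtain ⟨hwS, hwT⟩ := Submodule.mem_inf.mp hw
  have h1 : f i * ⟪w, w⟫ ≤ ⟪w, Matrix.toEuclideanLin X w⟫ := by
    refine quad_ge hX (fun j hj => ?_) hwS
    rw [hs₁] at hj
    obtain ⟨k, hk, rfl⟩ := Finset.mem_image.mp hj
    have : f i ≤ f k := hfm (Finset.mem_Iic.mp hk)
    simpa [hf] using this
  have h2 : ⟪w, Matrix.toEuclideanLin Y w⟫ ≤ g i * ⟪w, w⟫ := by
    refine quad_le hY (fun j hj => ?_) hwT
    rw [hs₂] at hj
    obtain ⟨k, hk, rfl⟩ := Finset.mem_image.mp hj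
    have : g k ≤ g i := hgm (Finset.mem_Ici.mp hk)
    simpa [hg] using this
  have h3 : 0 ≤ ⟪w, Matrix.toEuclideanLin (Y - (X + t • 1)) w⟫ := psd_inner_nonneg hpsd w
  have h4 : ⟪w, Matrix.toEuclideanLin (Y - (X + t • 1)) w⟫ =
      ⟪w, Matrix.toEuclideanLin Y w⟫ - ⟪w, Matrix.toEuclideanLin X w⟫ - t * ⟪w, w⟫ := by
    rw [map_sub, map_add, map_smul, toEuclideanLin_one]
    simp only [LinearMap.sub_apply, LinearMap.add_apply, LinearMap.smul_apply, LinearMap.id_apply]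
    rw [inner_sub_right, inner_add_right, real_inner_smul_right]
    ring
  have hww : 0 < ⟪w, w⟫ := by
    rcases lt_or_eq_of_le (real_inner_self_nonneg (x := w)) with h | h
    · exact h
    · exact absurd ((@inner_self_eq_zero ℝ _ _ _ _ w).mp h.symm) hw0
  have : (f i + t) * ⟪w, w⟫ ≤ g i * ⟪w, w⟫ := by nlinarith
  exact le_of_mul_le_mul_right this hww

lemma trace_unitary_conj (U : Matrix.unitaryGroup (Fin n) ℝ) (d : Fin n → ℝ) :
    ((U : Matrix (Fin n) (Fin n) ℝ) * Matrix.diagonal d *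
      star (U : Matrix (Fin n) (Fin n) ℝ)).trace = ∑ i, d i := by
  rw [Matrix.trace_mul_comm, ← Matrix.mul_assoc, Unitary.coe_star_mul_self U, Matrix.one_mul,
    Matrix.trace_diagonal]

lemma trace_eq_sum_eigenvalues {X : Matrix (Fin n) (Fin n) ℝ} (hX : X.IsHermitian) :
    X.trace = ∑ i, hX.eigenvalues i := by
  nth_rewrite 1 [hX.spectral_theorem]
  have hd : (RCLike.ofReal ∘ hX.eigenvalues : Fin n → ℝ) = hX.eigenvalues := by
    funext i
    simp [RCLike.ofReal_real_eq_id]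
  rw [hd, Unitary.conjStarAlgAut_apply, trace_unitary_conj]

/-- The antitone sorting permutation. -/
noncomputable def antiPerm (v : Fin n → ℝ) : Equiv.Perm (Fin n) :=
  Fin.revPerm.trans (Tuple.sort v)

lemma antiPerm_antitone (v : Fin n → ℝ) : Antitone (v ∘ antiPerm v) := by
  intro i j hij
  have h := Tuple.monotone_sort v (show j.rev ≤ i.rev from Fin.rev_le_rev.mpr hij)
  simpa [antiPerm, Function.comp, Equiv.trans_apply] using h

lemma card_filter_lt (r : ℕ) (hrn : r ≤ n) :
    (univ.filter (fun i : Fin n => (i : ℕ) < r)).card = r := by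
  have he : univ.filter (fun i : Fin n => (i : ℕ) < r) =
      (Finset.range r).attachFin (fun m hm => lt_of_lt_of_le (Finset.mem_range.mp hm) hrn) := by
    ext i
    simp [Finset.mem_attachFin, Finset.mem_range]
  rw [he, Finset.card_attachFin, Finset.card_range]

end WielandtAux

open WielandtAux

/-- Wielandt's theorem: if `C = A + B` with `A`, `B`, `C` real symmetric and
`α`, `β`, `γ` are their eigenvalues in non-increasing order, then for every index
set `I` of cardinality `r`, `∑_{i∈I} γ i ≤ ∑_{i∈I} α i + ∑_{i<r} β i`. -/
theorem stmt6 (n : ℕ) (A B C : Matrix (Fin n) (Fin n) ℝ)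
    (hA : A.IsHermitian) (hB : B.IsHermitian) (hC : C.IsHermitian)
    (hsum : C = A + B)
    (α β γ : Fin n → ℝ)
    (σ τ ρ : Equiv.Perm (Fin n))
    (hα : α = hA.eigenvalues ∘ σ) (hαmono : Antitone α)
    (hβ : β = hB.eigenvalues ∘ τ) (hβmono : Antitone β)
    (hγ : γ = hC.eigenvalues ∘ ρ) (hγmono : Antitone γ) :
    ∀ I : Finset (Fin n),
      ∑ i ∈ I, γ i ≤ ∑ i ∈ I, α i +
        ∑ i ∈ univ.filter (fun i : Fin n => (i : ℕ) < I.card), β i := by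
  intro I
  classical
  by_cases hr0 : I.card = 0
  · obtain rfl : I = (∅ : Finset (Fin n)) := Finset.card_eq_zero.mp hr0
    simp
  · have hr1 : 1 ≤ I.card := Nat.one_le_iff_ne_zero.mpr hr0
    have hrn : I.card ≤ n := by
      simpa using Finset.card_le_card (Finset.subset_univ I)
    set r := I.card with hrdef
    have hr1n : r - 1 < n := by omega
    set t := β ⟨r - 1, hr1n⟩ with ht
    have htIH : ((t : ℝ) • (1 : Matrix (Fin n) (Fin n) ℝ)).IsHermitian := by
      simp [Matrix.IsHermitian, Matrix.conjTranspose_smul]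
    have hB' : (B - t • (1 : Matrix (Fin n) (Fin n) ℝ)).IsHermitian := hB.sub htIH
    set B' := B - t • (1 : Matrix (Fin n) (Fin n) ℝ) with hB'def
    set U := hB'.eigenvectorUnitary with hUdef
    set μ := hB'.eigenvalues with hμdef
    set P := (U : Matrix (Fin n) (Fin n) ℝ) * Matrix.diagonal (fun i => max (μ i) 0) *
      star (U : Matrix (Fin n) (Fin n) ℝ) with hPdef
    set N := (U : Matrix (Fin n) (Fin n) ℝ) * Matrix.diagonal (fun i => max (-μ i) 0) *
      star (U : Matrix (Fin n) (Fin n) ℝ) with hNdef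
    have hPpsd : P.PosSemidef := by
      rw [hPdef, Matrix.star_eq_conjTranspose]
      exact (Matrix.PosSemidef.diagonal (fun i => le_max_right _ _)).mul_mul_conjTranspose_same _
    have hNpsd : N.PosSemidef := by
      rw [hNdef, Matrix.star_eq_conjTranspose]
      exact (Matrix.PosSemidef.diagonal (fun i => le_max_right _ _)).mul_mul_conjTranspose_same _
    have hPN : P - N = B' := by
      have hdiag : Matrix.diagonal (fun i => max (μ i) 0) -
          Matrix.diagonal (fun i => max (-μ i) 0) = Matrix.diagonal μ := by
        rw [Matrix.diagonal_sub]
        exact congrArg Matrix.diagonal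
          (funext fun i => max_zero_sub_max_neg_zero_eq_self (μ i))
      have hofReal : (RCLike.ofReal ∘ μ : Fin n → ℝ) = μ := by
        funext i
        simp [RCLike.ofReal_real_eq_id]
      rw [hPdef, hNdef, ← Matrix.sub_mul, ← Matrix.mul_sub, hdiag]
      conv_rhs => rw [hB'.spectral_theorem]
      rw [hofReal, Unitary.conjStarAlgAut_apply]
    set D := A + t • (1 : Matrix (Fin n) (Fin n) ℝ) + P with hDdef
    have hD : D.IsHermitian := (hA.add htIH).add hPpsd.1
    set δ := hD.eigenvalues ∘ antiPerm hD.eigenvalues with hδdef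
    have hδmono : Antitone δ := antiPerm_antitone _
    have hγδ : ∀ i, γ i ≤ δ i := by
      intro i
      have h0 : D - (C + (0 : ℝ) • (1 : Matrix (Fin n) (Fin n) ℝ)) = N := by
        have hNeq : N = P - B' := by rw [← hPN]; abel
        rw [hsum, hDdef, hNeq, hB'def]
        module
      have := weyl hC hD 0 (h0 ▸ hNpsd) hγ hγmono hδdef hδmono i
      linarith
    have hαδ : ∀ i, α i + t ≤ δ i := by
      intro i
      have h0 : D - (A + t • (1 : Matrix (Fin n) (Fin n) ℝ)) = P := by
        rw [hDdef]; abel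
      exact weyl hA hD t (h0 ▸ hPpsd) hα hαmono hδdef hδmono i
    set β'' := μ ∘ antiPerm μ with hβ''def
    have hβ''m : Antitone β'' := antiPerm_antitone _
    have hμperm : β'' = hB'.eigenvalues ∘ antiPerm μ := by rw [hβ''def, hμdef]
    have hshift : ∀ i, β'' i = β i - t := by
      intro i
      have e1 : B' - (B + (-t) • (1 : Matrix (Fin n) (Fin n) ℝ)) = 0 := by
        rw [hB'def]; module
      have e2 : B - (B' + t • (1 : Matrix (Fin n) (Fin n) ℝ)) = 0 := by
        rw [hB'def]; module
      have h1 := weyl hB hB' (-t) (e1 ▸ Matrix.PosSemidef.zero) hβ hβmono hμperm hβ''m i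
      have h2 := weyl hB' hB t (e2 ▸ Matrix.PosSemidef.zero) hμperm hβ''m hβ hβmono i
      linarith
    have htrP : P.trace = ∑ i, max (μ i) 0 := by
      rw [hPdef]; exact trace_unitary_conj U _
    have htrD : D.trace = A.trace + (n : ℝ) * t + P.trace := by
      rw [hDdef, Matrix.trace_add, Matrix.trace_add, Matrix.trace_smul, Matrix.trace_one,
        Fintype.card_fin, smul_eq_mul]
      ring
    have hsumδ : ∑ i, δ i = D.trace := by
      rw [trace_eq_sum_eigenvalues hD, hδdef]
      exact Equiv.sum_comp (antiPerm hD.eigenvalues) hD.eigenvalues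
    have hsumα : ∑ i, α i = A.trace := by
      rw [trace_eq_sum_eigenvalues hA, hα]
      exact Equiv.sum_comp σ hA.eigenvalues
    have hcard : (univ.filter (fun i : Fin n => (i : ℕ) < r)).card = r := card_filter_lt r hrn
    have hsumP : P.trace =
        (∑ i ∈ univ.filter (fun i : Fin n => (i : ℕ) < r), β i) - r * t := by
      rw [htrP, ← Equiv.sum_comp (antiPerm μ) (fun j => max (μ j) 0)]
      have hmax : ∀ i : Fin n, max (μ (antiPerm μ i)) 0 = max (β'' i) 0 := fun i => rfl
      simp only [hmax]
      rw [← Finset.sum_filter_add_sum_filter_not univ (fun i : Fin n => (i : ℕ) < r)]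
      have e1 : ∀ i ∈ univ.filter (fun i : Fin n => (i : ℕ) < r), max (β'' i) 0 = β i - t := by
        intro i hi
        have hi' : (i : ℕ) < r := (Finset.mem_filter.mp hi).2
        have hle : i ≤ (⟨r - 1, hr1n⟩ : Fin n) := by
          rw [Fin.le_def]; simp; omega
        have hbt : t ≤ β i := by rw [ht]; exact hβmono hle
        rw [hshift i]
        exact max_eq_left (by linarith)
      have e2 : ∀ i ∈ univ.filter (fun i : Fin n => ¬ ((i : ℕ) < r)), max (β'' i) 0 = 0 := by
        intro i hi
        have hi' : ¬ ((i : ℕ) < r) := (Finset.mem_filter.mp hi).2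
        have hle : (⟨r - 1, hr1n⟩ : Fin n) ≤ i := by
          rw [Fin.le_def]; simp; omega
        have hbt : β i ≤ t := by rw [ht]; exact hβmono hle
        rw [hshift i]
        exact max_eq_right (by linarith)
      rw [Finset.sum_congr rfl e1, Finset.sum_congr rfl e2, Finset.sum_const_zero, add_zero,
        Finset.sum_sub_distrib, Finset.sum_const, hcard, nsmul_eq_mul]
    have hIsum : ∑ i ∈ I, γ i ≤ ∑ i ∈ I, δ i := Finset.sum_le_sum fun i _ => hγδ i
    have hcompl : ∑ i ∈ I, δ i + ∑ i ∈ Iᶜ, δ i = ∑ i, δ i := Finset.sum_add_sum_compl I δ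
    have hcomplα : ∑ i ∈ I, α i + ∑ i ∈ Iᶜ, α i = ∑ i, α i := Finset.sum_add_sum_compl I α
    have hlower : ∑ i ∈ Iᶜ, (α i + t) ≤ ∑ i ∈ Iᶜ, δ i := Finset.sum_le_sum fun i _ => hαδ i
    have hcardc : (Iᶜ : Finset (Fin n)).card = n - r := by
      rw [Finset.card_compl, Fintype.card_fin]
    have hconst : ∑ i ∈ Iᶜ, (α i + t) = ∑ i ∈ Iᶜ, α i + ((n : ℝ) - r) * t := by
      rw [Finset.sum_add_distrib, Finset.sum_const, hcardc, nsmul_eq_mul]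
      congr 2
      push_cast [Nat.cast_sub hrn]
      ring
    linarith
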